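/- Let B ⊆ ℕ^[n] be a strongly-stable-complement: B is an order ideal of monomials such that if j < i and y_i m ∈ B then y_j m ∈ B. Suppose additionally B satisfies (B4): m ∈ B ∩ ℕ^[k,n] of degree ≥ k implies m·ℕ^{k} ⊆ B. Then every standard pair of the complement is of the form m·ℕ^[i] with deg(m) ≤ i. -/
import Mathlib


/-- A monomial in variables `y_i` (`i : ℕ`), identified with its exponent vector. -/
abbrev Mono : Type := ℕ →₀ ℕ

/-- Total degree of a monomial. -/
def mdeg (m : Mono) : ℕ := m.sum fun _ e => e

/-- The set of monomials `m·ℕ^σ`, i.e. products of `m` with monomials supported on `σ`. -/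
def pairSet (m : Mono) (σ : Finset ℕ) : Set Mono :=
  { x | ∃ t : Mono, t.support ⊆ σ ∧ x = m + t }

/-- `m·ℕ^σ` is an admissible pair of (the complement of) `B`:
`supp m ∩ σ = ∅` and `m·ℕ^σ ⊆ B`. -/
def Admissible (B : Set Mono) (m : Mono) (σ : Finset ℕ) : Prop :=
  Disjoint m.support σ ∧ pairSet m σ ⊆ B

/-- A standard pair: an inclusion-maximal admissible pair. -/
def IsStandardPair (B : Set Mono) (m : Mono) (σ : Finset ℕ) : Prop :=
  Admissible B m σ ∧
    ∀ (m' : Mono) (σ' : Finset ℕ), Admissible B m' σ' →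
      pairSet m σ ⊆ pairSet m' σ' → pairSet m σ = pairSet m' σ'

/-- `B` is shifted: if `1 ≤ j < i` and `y_i·m ∈ B` then `y_j·m ∈ B`. -/
def ShiftedSet (B : Set Mono) : Prop :=
  ∀ (m : Mono) (i j : ℕ), 1 ≤ j → j < i →
    m + Finsupp.single i 1 ∈ B → m + Finsupp.single j 1 ∈ B

/-- `B` is an order ideal of monomials: closed under divisibility. -/
def IsOrderIdeal (B : Set Mono) : Prop := ∀ m ∈ B, ∀ m' : Mono, m' ≤ m → m' ∈ B

/-- All monomials of `B` involve only the variables `y_1, ..., y_n`. -/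
def SupportedIn (B : Set Mono) (n : ℕ) : Prop := ∀ m ∈ B, m.support ⊆ Finset.Icc 1 n

/-- `m·ℕ^{i} ⊆ B`: all products of `m` with powers of `y_i` lie in `B`
(for `i = 0` this just means `m ∈ B`, the convention `ℕ^{∅} = {1}`). -/
def VarTower (B : Set Mono) (m : Mono) (i : ℕ) : Prop :=
  if i = 0 then m ∈ B else ∀ t : ℕ, m + Finsupp.single i t ∈ B

/-- `A_i(B) = { m ∈ ℕ^[i+1,n] : m·ℕ^{i} ⊆ B, m·ℕ^{i+1} ⊄ B }`. -/
def Aset (B : Set Mono) (n i : ℕ) : Set Mono :=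
  { m | m.support ⊆ Finset.Icc (i + 1) n ∧ VarTower B m i ∧ ¬ VarTower B m (i + 1) }

/-- Property (B4): if `m ∈ B ∩ ℕ^[k,n]` has degree `≥ k` then `m·ℕ^{k} ⊆ B`. -/
def HasB4 (B : Set Mono) (n : ℕ) : Prop :=
  ∀ (k : ℕ) (m : Mono), 1 ≤ k → m ∈ B → m.support ⊆ Finset.Icc k n → k ≤ mdeg m →
    ∀ t : ℕ, m + Finsupp.single k t ∈ B

/- ---------- auxiliary lemmas ---------- -/

lemma mdeg_add (a b : Mono) : mdeg (a + b) = mdeg a + mdeg b := by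
  unfold mdeg
  exact Finsupp.sum_add_index' (fun _ => rfl) (fun _ _ _ => rfl)

lemma mdeg_single (j a : ℕ) : mdeg (Finsupp.single j a) = a := by
  unfold mdeg; exact Finsupp.sum_single_index rfl

lemma mdeg_eq_zero {s : Mono} (h : mdeg s = 0) : s = 0 := by
  ext i
  by_cases hi : i ∈ s.support
  · simpa using Finset.sum_eq_zero_iff.mp h i hi
  · simpa using Finsupp.notMem_support_iff.mp hi

lemma descent {B : Set Mono} (h1 : ShiftedSet B) (i : ℕ) :
    ∀ d : ℕ, ∀ s : Mono, mdeg s = d → (∀ j ∈ s.support, 1 ≤ j ∧ j < i) →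
      ∀ u : Mono, u + Finsupp.single i d ∈ B → u + s ∈ B := by
  intro d
  induction d with
  | zero =>
    intro s hs _ u hu
    rw [mdeg_eq_zero hs]
    simpa using hu
  | succ d ih =>
    intro s hs hsupp u hu
    have hsne : s ≠ 0 := by
      intro h0; rw [h0] at hs; simp [mdeg] at hs
    obtain ⟨j, hj⟩ := Finsupp.support_nonempty_iff.mpr hsne
    have hjpos : 1 ≤ s j := Nat.one_le_iff_ne_zero.mpr (Finsupp.mem_support_iff.mp hj)
    obtain ⟨hj1, hji⟩ := hsupp j hj
    set s' : Mono := s - Finsupp.single j 1 with hs'def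
    have hdecomp : s = Finsupp.single j 1 + s' := by
      ext x
      simp only [hs'def, Finsupp.add_apply, Finsupp.tsub_apply, Finsupp.single_apply]
      by_cases hx : j = x
      · subst hx; simp only [if_pos rfl, if_true]; omega
      · simp [hx]
    have hds' : mdeg s' = d := by
      have := mdeg_add (Finsupp.single j 1) s'
      rw [← hdecomp, hs, mdeg_single] at this
      omega
    have hsupp' : ∀ x ∈ s'.support, 1 ≤ x ∧ x < i := by
      intro x hx
      apply hsupp
      have : s' x ≠ 0 := Finsupp.mem_support_iff.mp hx
      apply Finsupp.mem_support_iff.mpr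
      simp only [hs'def, Finsupp.tsub_apply] at this
      omega
    have step : (u + Finsupp.single i d) + Finsupp.single j 1 ∈ B := by
      apply h1 _ i j hj1 hji
      have : (u + Finsupp.single i d) + Finsupp.single i 1 = u + Finsupp.single i (d+1) := by
        rw [add_assoc, ← Finsupp.single_add]
      rwa [this]
    have := ih s' hds' hsupp' (u + Finsupp.single j 1) (by
      have e : u + Finsupp.single j 1 + Finsupp.single i d
          = u + Finsupp.single i d + Finsupp.single j 1 := add_right_comm _ _ _
      rwa [e])
    have e2 : u + Finsupp.single j 1 + s' = u + s := by rw [hdecomp, add_assoc]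
    rwa [e2] at this

/-- Maximality consequence: a standard pair `(m, σ)` cannot be extended by a
new variable `j ∉ σ` (dropping the `j`-th exponent of `m`). -/
lemma not_extend {B : Set Mono} {m : Mono} {σ : Finset ℕ}
    (h : IsStandardPair B m σ) (j : ℕ) (hj : j ∉ σ)
    (hB : pairSet (m - Finsupp.single j (m j)) (insert j σ) ⊆ B) : False := by
  obtain ⟨⟨hdisj, hsub⟩, hmax⟩ := h
  set m' : Mono := m - Finsupp.single j (m j) with hm'def
  have hm'j : m' j = 0 := by
    simp [hm'def, Finsupp.tsub_apply, Finsupp.single_apply]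
  have hm'x : ∀ x, x ≠ j → m' x = m x := by
    intro x hx
    simp [hm'def, Finsupp.tsub_apply, Finsupp.single_apply, (Ne.symm hx)]
  have hmdec : m = m' + Finsupp.single j (m j) := by
    ext x
    by_cases hx : x = j
    · subst hx; simp [hm'j, Finsupp.single_apply]
    · simp [hm'x x hx, Finsupp.single_apply, Ne.symm hx]
  have hadm : Admissible B m' (insert j σ) := by
    constructor
    · rw [Finset.disjoint_right]
      intro x hx
      rcases Finset.mem_insert.mp hx with h' | h'
      · subst h'; simp [Finsupp.mem_support_iff, hm'j]
      · intro hc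
        have : m x = 0 := by
          have := Finset.disjoint_right.mp hdisj h'
          simpa [Finsupp.mem_support_iff] using this
        have hxj : x ≠ j := fun e => hj (e ▸ h')
        exact absurd (by rw [hm'x x hxj, this]) (Finsupp.mem_support_iff.mp hc)
    · exact hB
  have hsubset : pairSet m σ ⊆ pairSet m' (insert j σ) := by
    rintro x ⟨t, ht, rfl⟩
    refine ⟨Finsupp.single j (m j) + t, ?_, ?_⟩
    · refine (Finsupp.support_add).trans ?_
      apply Finset.union_subset
      · exact (Finsupp.support_single_subset).trans (by simp)
      · exact ht.trans (Finset.subset_insert _ _)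
    · rw [← add_assoc, ← hmdec]
  have heq := hmax m' (insert j σ) hadm hsubset
  -- the witness element with j-exponent m j + 1
  have hwit : m' + Finsupp.single j (m j + 1) ∈ pairSet m' (insert j σ) := by
    exact ⟨Finsupp.single j (m j + 1),
      (Finsupp.support_single_subset).trans (by simp), rfl⟩
  rw [← heq] at hwit
  obtain ⟨t, ht, hte⟩ := hwit
  have htj : t j = 0 := by
    by_contra hc
    exact hj (ht (Finsupp.mem_support_iff.mpr hc))
  have := congrArg (fun f : Mono => f j) hte
  simp [Finsupp.add_apply, Finsupp.single_apply, hm'j, htj] at this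

theorem standardPair_initial_interval_deg_le
    (n : ℕ) (B : Set Mono) (h1 : ShiftedSet B) (h2 : IsOrderIdeal B)
    (h3 : SupportedIn B n) (h4 : HasB4 B n) (m : Mono) (σ : Finset ℕ)
    (h : IsStandardPair B m σ) :
    σ = Finset.Icc 1 σ.card ∧ mdeg m ≤ σ.card := by
  obtain ⟨⟨hdisj, hsub⟩, hmax⟩ := h.imp id id
  have hmB : m ∈ B := hsub ⟨0, by simp, by simp⟩
  -- every i ∈ σ satisfies 1 ≤ i ≤ n
  have hσrange : ∀ i ∈ σ, 1 ≤ i ∧ i ≤ n := by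
    intro i hi
    have hmi : m i = 0 := by
      have := Finset.disjoint_right.mp hdisj hi
      simpa [Finsupp.mem_support_iff] using this
    have hx : m + Finsupp.single i 1 ∈ B := hsub ⟨Finsupp.single i 1,
      (Finsupp.support_single_subset).trans (by simpa using hi), rfl⟩
    have : i ∈ (m + Finsupp.single i 1).support := by
      simp [Finsupp.mem_support_iff, Finsupp.add_apply, hmi, Finsupp.single_apply]
    have := h3 _ hx this
    simpa using this
  -- σ is downward closed within positives
  have hdown : ∀ i ∈ σ, ∀ j, 1 ≤ j → j < i → j ∈ σ := by
    intro i hi j hj1 hji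
    by_contra hjσ
    apply not_extend ⟨⟨hdisj, hsub⟩, hmax⟩ j hjσ
    rintro x ⟨t, ht, rfl⟩
    set m' : Mono := m - Finsupp.single j (m j) with hm'def
    set t' : Mono := t - Finsupp.single j (t j) with ht'def
    have ht' : t'.support ⊆ σ := by
      intro x hx
      have hxne : t' x ≠ 0 := Finsupp.mem_support_iff.mp hx
      have hxj : x ≠ j := by
        intro e; subst e
        simp [ht'def, Finsupp.tsub_apply, Finsupp.single_apply] at hxne
      have : t x ≠ 0 := by
        simp only [ht'def, Finsupp.tsub_apply, Finsupp.single_apply, Ne.symm hxj] at hxne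
        simpa using hxne
      have := ht (Finsupp.mem_support_iff.mpr this)
      rcases Finset.mem_insert.mp this with h' | h'
      · exact absurd h' hxj
      · exact h'
    -- a := m j + t j
    set a : ℕ := m j + t j with hadef
    -- m' + t' + single i a ∈ B via order ideal from m + (t' + single i a)
    have hbig : m + (t' + Finsupp.single i a) ∈ B := by
      apply hsub
      refine ⟨t' + Finsupp.single i a, ?_, rfl⟩
      refine (Finsupp.support_add).trans (Finset.union_subset ht' ?_)
      exact (Finsupp.support_single_subset).trans (by simpa using hi)
    have hle : m' + t' + Finsupp.single i a ≤ m + (t' + Finsupp.single i a) := by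
      rw [Finsupp.le_def]
      intro x
      simp only [Finsupp.add_apply, hm'def, Finsupp.tsub_apply, Finsupp.single_apply]
      by_cases hx : j = x
      · subst hx; simp only [if_pos rfl, if_true]; omega
      · simp only [if_neg hx]; omega
    have hmid : m' + t' + Finsupp.single i a ∈ B := h2 _ hbig _ hle
    -- descent: replace single i a by single j a
    have hdes : m' + t' + Finsupp.single j a ∈ B := by
      have := descent h1 i a (Finsupp.single j a) (mdeg_single j a)
        (fun x hx => by
          have := Finsupp.support_single_subset hx
          simp only [Finset.mem_singleton] at this
          subst this; exact ⟨hj1, hji⟩)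
        (m' + t') hmid
      exact this
    -- m' + t ≤ m' + t' + single j a
    apply h2 _ hdes
    rw [Finsupp.le_def]
    intro x
    simp only [Finsupp.add_apply, hm'def, ht'def, Finsupp.tsub_apply, Finsupp.single_apply]
    by_cases hx : j = x
    · subst hx; simp only [if_pos rfl, if_true]; omega
    · simp only [if_neg hx]; omega
  -- hence σ = Icc 1 σ.card
  have hσIcc : σ = Finset.Icc 1 σ.card := by
    have hsubIcc : Finset.Icc 1 σ.card ⊆ σ := by
      intro x hx
      simp only [Finset.mem_Icc] at hx
      by_contra hxσ
      have hlt : ∀ y ∈ σ, y < x := by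
        intro y hy
        by_contra hylt
        push_neg at hylt
        rcases eq_or_lt_of_le hylt with e | lt
        · exact hxσ (e ▸ hy)
        · exact hxσ (hdown y hy x hx.1 lt)
      have : σ ⊆ Finset.Icc 1 (x - 1) := by
        intro y hy
        simp only [Finset.mem_Icc]
        exact ⟨(hσrange y hy).1, by have := hlt y hy; omega⟩
      have := Finset.card_le_card this
      simp only [Nat.card_Icc] at this
      omega
    have hcard : (Finset.Icc 1 σ.card).card = σ.card := by simp
    exact (Finset.eq_of_subset_of_card_le hsubIcc (by simp)).symm
  refine ⟨hσIcc, ?_⟩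
  -- part 2: mdeg m ≤ σ.card
  set k := σ.card with hk
  by_contra hdeg
  push_neg at hdeg
  have hk1σ : (k + 1) ∉ σ := by rw [hσIcc]; simp
  have hsuppm : m.support ⊆ Finset.Icc (k+1) n := by
    intro x hx
    have h1n := h3 _ hmB hx
    simp only [Finset.mem_Icc] at h1n ⊢
    have : x ∉ σ := Finset.disjoint_left.mp hdisj hx
    rw [hσIcc] at this
    simp only [Finset.mem_Icc] at this
    omega
  have hB4 : ∀ t : ℕ, m + Finsupp.single (k+1) t ∈ B :=
    h4 (k+1) m (by omega) hmB hsuppm (by omega)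
  apply not_extend ⟨⟨hdisj, hsub⟩, hmax⟩ (k+1) hk1σ
  rintro x ⟨t, ht, rfl⟩
  set m' : Mono := m - Finsupp.single (k+1) (m (k+1)) with hm'def
  set s : Mono := t - Finsupp.single (k+1) (t (k+1)) with hsdef
  have hs : ∀ x ∈ s.support, 1 ≤ x ∧ x < k + 1 := by
    intro x hx
    have hxne : s x ≠ 0 := Finsupp.mem_support_iff.mp hx
    have hxj : x ≠ k + 1 := by
      intro e; subst e
      simp [hsdef, Finsupp.tsub_apply, Finsupp.single_apply] at hxne
    have : t x ≠ 0 := by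
      simp only [hsdef, Finsupp.tsub_apply, Finsupp.single_apply, Ne.symm hxj] at hxne
      simpa using hxne
    have := ht (Finsupp.mem_support_iff.mpr this)
    rcases Finset.mem_insert.mp this with h' | h'
    · exact absurd h' hxj
    · rw [hσIcc] at h'
      simp only [Finset.mem_Icc] at h'
      omega
  have hbig : (m + Finsupp.single (k+1) (t (k+1))) + Finsupp.single (k+1) (mdeg s) ∈ B := by
    have e : (m + Finsupp.single (k+1) (t (k+1))) + Finsupp.single (k+1) (mdeg s)
        = m + Finsupp.single (k+1) (t (k+1) + mdeg s) := by
      rw [add_assoc, ← Finsupp.single_add]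
    rw [e]; exact hB4 _
  have hdes : (m + Finsupp.single (k+1) (t (k+1))) + s ∈ B :=
    descent h1 (k+1) (mdeg s) s rfl hs _ hbig
  apply h2 _ hdes
  rw [Finsupp.le_def]
  intro x
  simp only [Finsupp.add_apply, hm'def, hsdef, Finsupp.tsub_apply, Finsupp.single_apply]
  by_cases hx : k + 1 = x
  · subst hx; simp only [if_pos rfl, if_true]; omega
  · simp only [if_neg hx]; omega
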